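/- arXiv:1203.3255 — 3 statements merged into one kernel-verified Lean document; each statement's English description precedes it below -/
import Mathlib

section
/- Let T > 0, let u1, u2 : [0,T] → [0,1] be continuous controls, and let (S, L1, I, L2, R) : [0,T] → ℝ⁵ be a differentiable solution of the TB control system with controls u1, u2 whose initial values S(0), L1(0), I(0), L2(0), R(0) are all nonnegative and satisfy S(0) + L1(0) + I(0) + L2(0) + R(0) = N. Then for every t ∈ [0,T], each of S(t), L1(t), I(t), L2(t), R(t) lies in the interval [0, N]. -/
open Set Filter Real
open scoped Topology

lemma negPart_slope_le {T : ℝ} {f : ℝ → ℝ} {f' x : ℝ} (hx : x ∈ Set.Ico (0:ℝ) T)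
    (hf : HasDerivWithinAt f f' (Set.Icc (0:ℝ) T) x) {ε : ℝ} (hε : 0 < ε) :
    ∀ᶠ z in 𝓝[>] x, (z - x)⁻¹ * (max (-(f z)) 0 - max (-(f x)) 0) ≤
      (if f x ≤ 0 then max (-f') 0 else 0) + ε := by
  have hsub : Set.Ioc x T ⊆ Set.Icc (0:ℝ) T := fun z hz => ⟨le_trans hx.1 hz.1.le, hz.2⟩
  have hmem : Set.Ioc x T ∈ 𝓝[>] x := Ioc_mem_nhdsGT_of_mem ⟨le_rfl, hx.2⟩
  have hle : 𝓝[>] x ≤ 𝓝[Set.Ioc x T] x := nhdsWithin_le_of_mem hmem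
  have hle2 : 𝓝[>] x ≤ 𝓝[Set.Icc (0:ℝ) T] x := hle.trans (nhdsWithin_mono x hsub)
  by_cases h0 : f x ≤ 0
  · rw [if_pos h0]
    have hslope : Tendsto (slope f x) (𝓝[Set.Ioc x T] x) (𝓝 f') := by
      have h := hf.mono hsub
      rw [hasDerivWithinAt_iff_tendsto_slope,
        diff_singleton_eq_self (by simp : x ∉ Set.Ioc x T)] at h
      exact h
    have hev : ∀ᶠ z in 𝓝[>] x, f' - ε < slope f x z :=
      hle (hslope.eventually (eventually_gt_nhds (by linarith)))
    filter_upwards [hev, self_mem_nhdsWithin] with z hz hz'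
    have hd : 0 < z - x := sub_pos.2 hz'
    have hsl : (f' - ε) * (z - x) < f z - f x := by
      rw [slope_def_field, lt_div_iff₀ hd] at hz; linarith
    have hpx : max (-(f x)) 0 = -(f x) := max_eq_left (by linarith)
    rw [hpx, inv_mul_le_iff₀ hd]
    rcases le_or_gt (-(f z)) 0 with h | h
    · rw [max_eq_right h]
      nlinarith [mul_nonneg hd.le (add_nonneg (le_max_right (-f') 0) hε.le)]
    · rw [max_eq_left h.le]
      nlinarith [mul_le_mul_of_nonneg_right (le_max_left (-f') 0) hd.le]
  · rw [if_neg h0]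
    push_neg at h0
    have hc : Tendsto f (𝓝[>] x) (𝓝 (f x)) := hf.continuousWithinAt.mono_left hle2
    filter_upwards [hc.eventually (eventually_gt_nhds h0)] with z hz
    have h1 : max (-(f z)) 0 = 0 := max_eq_right (by linarith)
    rw [h1, max_eq_right (by linarith : -(f x) ≤ 0)]
    simp [hε.le]

set_option maxHeartbeats 2000000

/-- For the TB control system with continuous controls taking
values in `[0,1]`, any differentiable solution on `[0,T]` with nonnegative
initial data summing to `N` stays in `[0, N]` componentwise. -/
theorem tb_solution_stays_in_box
    (μ β δ ω ωR σ σR τ0 τ1 τ2 N ε1 ε2 φ : ℝ)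
    (hμ : 0 < μ) (hβ : 0 < β) (hδ : 0 < δ) (hω : 0 < ω) (hωR : 0 < ωR)
    (hσ : 0 < σ) (hσR : 0 < σR) (hτ0 : 0 < τ0) (hτ1 : 0 < τ1) (hτ2 : 0 < τ2)
    (hN : 0 < N) (hε1 : 0 < ε1) (hε2 : 0 < ε2) (hφ : φ ∈ Set.Ioo (0 : ℝ) 1)
    (T : ℝ) (hT : 0 < T)
    (u1 u2 : ℝ → ℝ)
    (hu1c : ContinuousOn u1 (Set.Icc (0 : ℝ) T))
    (hu2c : ContinuousOn u2 (Set.Icc (0 : ℝ) T))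
    (hu1 : ∀ t ∈ Set.Icc (0 : ℝ) T, u1 t ∈ Set.Icc (0 : ℝ) 1)
    (hu2 : ∀ t ∈ Set.Icc (0 : ℝ) T, u2 t ∈ Set.Icc (0 : ℝ) 1)
    (S L1 I L2 R : ℝ → ℝ)
    (hS : ∀ t ∈ Set.Icc (0 : ℝ) T,
      HasDerivWithinAt S (μ * N - β / N * I t * S t - μ * S t) (Set.Icc (0 : ℝ) T) t)
    (hL1 : ∀ t ∈ Set.Icc (0 : ℝ) T,
      HasDerivWithinAt L1
        (β / N * I t * (S t + σ * L2 t + σR * R t) - (δ + τ1 + μ) * L1 t)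
        (Set.Icc (0 : ℝ) T) t)
    (hI : ∀ t ∈ Set.Icc (0 : ℝ) T,
      HasDerivWithinAt I
        (φ * δ * L1 t + ω * L2 t + ωR * R t - (τ0 + ε1 * u1 t + μ) * I t)
        (Set.Icc (0 : ℝ) T) t)
    (hL2 : ∀ t ∈ Set.Icc (0 : ℝ) T,
      HasDerivWithinAt L2
        ((1 - φ) * δ * L1 t - σ * (β / N) * I t * L2 t - (ω + ε2 * u2 t + τ2 + μ) * L2 t)
        (Set.Icc (0 : ℝ) T) t)
    (hR : ∀ t ∈ Set.Icc (0 : ℝ) T,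
      HasDerivWithinAt R
        ((τ0 + ε1 * u1 t) * I t + τ1 * L1 t + (τ2 + ε2 * u2 t) * L2 t
          - σR * (β / N) * I t * R t - (ωR + μ) * R t)
        (Set.Icc (0 : ℝ) T) t)
    (hS0 : 0 ≤ S 0) (hL10 : 0 ≤ L1 0) (hI0 : 0 ≤ I 0) (hL20 : 0 ≤ L2 0)
    (hR0 : 0 ≤ R 0)
    (hsum0 : S 0 + L1 0 + I 0 + L2 0 + R 0 = N) :
    ∀ t ∈ Set.Icc (0 : ℝ) T,
      S t ∈ Set.Icc (0 : ℝ) N ∧ L1 t ∈ Set.Icc (0 : ℝ) N ∧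
      I t ∈ Set.Icc (0 : ℝ) N ∧ L2 t ∈ Set.Icc (0 : ℝ) N ∧
      R t ∈ Set.Icc (0 : ℝ) N := by
  obtain ⟨hφ0, hφ1⟩ := hφ
  have hb : 0 < β / N := div_pos hβ hN
  -- continuity of the components
  have hSc : ContinuousOn S (Set.Icc 0 T) := fun t ht => (hS t ht).continuousWithinAt
  have hL1c : ContinuousOn L1 (Set.Icc 0 T) := fun t ht => (hL1 t ht).continuousWithinAt
  have hIc : ContinuousOn I (Set.Icc 0 T) := fun t ht => (hI t ht).continuousWithinAt
  have hL2c : ContinuousOn L2 (Set.Icc 0 T) := fun t ht => (hL2 t ht).continuousWithinAt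
  have hRc : ContinuousOn R (Set.Icc 0 T) := fun t ht => (hR t ht).continuousWithinAt
  -- a uniform bound on all components
  have hFc : ContinuousOn (fun t => |S t| + |L1 t| + |I t| + |L2 t| + |R t|) (Set.Icc 0 T) :=
    (((hSc.abs.add hL1c.abs).add hIc.abs).add hL2c.abs).add hRc.abs
  obtain ⟨t0, ht0, hmax0⟩ :=
    isCompact_Icc.exists_isMaxOn ⟨0, Set.left_mem_Icc.mpr hT.le⟩ hFc
  obtain ⟨M, hM0, hbnd⟩ : ∃ M : ℝ, 0 ≤ M ∧ ∀ t ∈ Set.Icc (0:ℝ) T,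
      |S t| ≤ M ∧ |L1 t| ≤ M ∧ |I t| ≤ M ∧ |L2 t| ≤ M ∧ |R t| ≤ M := by
    refine ⟨|S t0| + |L1 t0| + |I t0| + |L2 t0| + |R t0|, by positivity, ?_⟩
    intro t ht
    have h : |S t| + |L1 t| + |I t| + |L2 t| + |R t| ≤
        |S t0| + |L1 t0| + |I t0| + |L2 t0| + |R t0| := isMaxOn_iff.mp hmax0 t ht
    have a1 := abs_nonneg (S t); have a2 := abs_nonneg (L1 t); have a3 := abs_nonneg (I t)
    have a4 := abs_nonneg (L2 t); have a5 := abs_nonneg (R t)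
    exact ⟨by linarith, by linarith, by linarith, by linarith, by linarith⟩
  -- constant for the Grönwall estimate
  obtain ⟨K0, hK0def⟩ : ∃ K0 : ℝ,
      K0 = β / N * M * (1 + σ + σR) + δ + ω + ωR + τ0 + τ1 + τ2 + ε1 + ε2 := ⟨_, rfl⟩
  have hbM : 0 ≤ β / N * M := mul_nonneg hb.le hM0
  have hbig : 0 ≤ β / N * M * (1 + σ + σR) :=
    mul_nonneg hbM (by linarith)
  have hK0 : 0 ≤ K0 := by linarith [mul_nonneg hbM (show (0:ℝ) ≤ 1 + σ + σR by linarith)]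
  have hc1 : β / N * M * (1 + σ + σR) ≤ K0 := by linarith [hbig]
  have hc2 : β / N * M ≤ K0 := by
    linarith [mul_nonneg hbM (show (0:ℝ) ≤ σ + σR by linarith)]
  have hc3 : β / N * M * σ ≤ K0 := by
    linarith [mul_nonneg hbM (show (0:ℝ) ≤ 1 + σR by linarith)]
  have hc4 : β / N * M * σR ≤ K0 := by
    linarith [mul_nonneg hbM (show (0:ℝ) ≤ 1 + σ by linarith)]
  have hcφδ : φ * δ ≤ K0 := by
    linarith [mul_nonneg (show (0:ℝ) ≤ 1 - φ by linarith) hδ.le, hbig]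
  have hc1φδ : (1 - φ) * δ ≤ K0 := by
    linarith [mul_nonneg (show (0:ℝ) ≤ φ by linarith) hδ.le, hbig]
  have hcω : ω ≤ K0 := by linarith [hbig]
  have hcωR : ωR ≤ K0 := by linarith [hbig]
  have hcτ0 : τ0 + ε1 ≤ K0 := by linarith [hbig]
  have hcτ1 : τ1 ≤ K0 := by linarith [hbig]
  have hcτ2 : τ2 + ε2 ≤ K0 := by linarith [hbig]
  -- the sum of negative parts
  obtain ⟨g, hgdef⟩ : ∃ g : ℝ → ℝ, g = fun t => max (-(S t)) 0 + max (-(L1 t)) 0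
      + max (-(I t)) 0 + max (-(L2 t)) 0 + max (-(R t)) 0 := ⟨_, rfl⟩
  have hgc : ContinuousOn g (Set.Icc 0 T) := hgdef ▸
    ((((hSc.neg.sup continuousOn_const).add (hL1c.neg.sup continuousOn_const)).add
      (hIc.neg.sup continuousOn_const)).add (hL2c.neg.sup continuousOn_const)).add
      (hRc.neg.sup continuousOn_const)
  have hgnn : ∀ t, 0 ≤ g t := by
    intro t
    simp only [hgdef]
    exact add_nonneg (add_nonneg (add_nonneg (add_nonneg (le_max_right _ _)
      (le_max_right _ _)) (le_max_right _ _)) (le_max_right _ _)) (le_max_right _ _)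
  have hg0 : g 0 = 0 := by
    simp only [hgdef]
    rw [max_eq_right (neg_nonpos.2 hS0), max_eq_right (neg_nonpos.2 hL10),
      max_eq_right (neg_nonpos.2 hI0), max_eq_right (neg_nonpos.2 hL20),
      max_eq_right (neg_nonpos.2 hR0)]
    norm_num
  -- the pointwise bound on the right Dini derivative of `g`
  obtain ⟨D, hDdef⟩ : ∃ D : ℝ → ℝ, D = fun x =>
      (if S x ≤ 0 then max (-(μ * N - β / N * I x * S x - μ * S x)) 0 else 0)
    + (if L1 x ≤ 0 then
        max (-(β / N * I x * (S x + σ * L2 x + σR * R x) - (δ + τ1 + μ) * L1 x)) 0 else 0)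
    + (if I x ≤ 0 then
        max (-(φ * δ * L1 x + ω * L2 x + ωR * R x - (τ0 + ε1 * u1 x + μ) * I x)) 0 else 0)
    + (if L2 x ≤ 0 then
        max (-((1 - φ) * δ * L1 x - σ * (β / N) * I x * L2 x
          - (ω + ε2 * u2 x + τ2 + μ) * L2 x)) 0 else 0)
    + (if R x ≤ 0 then
        max (-((τ0 + ε1 * u1 x) * I x + τ1 * L1 x + (τ2 + ε2 * u2 x) * L2 x
          - σR * (β / N) * I x * R x - (ωR + μ) * R x)) 0 else 0) := ⟨_, rfl⟩
  have hf' : ∀ x ∈ Set.Ico (0:ℝ) T, ∀ r, D x < r →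
      ∃ᶠ z in 𝓝[>] x, (z - x)⁻¹ * (g z - g x) < r := by
    intro x hx r hr
    have hxI : x ∈ Set.Icc (0:ℝ) T := ⟨hx.1, hx.2.le⟩
    have hDx := congrFun hDdef x
    have hε : 0 < (r - D x) / 6 := by linarith
    have e1 := negPart_slope_le hx (hS x hxI) hε
    have e2 := negPart_slope_le hx (hL1 x hxI) hε
    have e3 := negPart_slope_le hx (hI x hxI) hε
    have e4 := negPart_slope_le hx (hL2 x hxI) hε
    have e5 := negPart_slope_le hx (hR x hxI) hε
    refine Filter.Eventually.frequently ?_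
    filter_upwards [e1, e2, e3, e4, e5] with z k1 k2 k3 k4 k5
    simp only [hgdef]
    linarith [k1, k2, k3, k4, k5]
  have hbound : ∀ x ∈ Set.Ico (0:ℝ) T, D x ≤ 5 * K0 * g x + 0 := by
    intro x hx
    have hxI : x ∈ Set.Icc (0:ℝ) T := ⟨hx.1, hx.2.le⟩
    obtain ⟨hbS, hbL1, hbI, hbL2, hbR⟩ := hbnd x hxI
    rw [abs_le] at hbS hbL1 hbI hbL2 hbR
    obtain ⟨hu1a, hu1b⟩ := hu1 x hxI
    obtain ⟨hu2a, hu2b⟩ := hu2 x hxI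
    have hε1u : 0 ≤ ε1 * u1 x := mul_nonneg hε1.le hu1a
    have hε2u : 0 ≤ ε2 * u2 x := mul_nonneg hε2.le hu2a
    have hps : (0:ℝ) ≤ max (-(S x)) 0 := le_max_right _ _
    have hp1 : (0:ℝ) ≤ max (-(L1 x)) 0 := le_max_right _ _
    have hpi : (0:ℝ) ≤ max (-(I x)) 0 := le_max_right _ _
    have hp2 : (0:ℝ) ≤ max (-(L2 x)) 0 := le_max_right _ _
    have hpr : (0:ℝ) ≤ max (-(R x)) 0 := le_max_right _ _
    have hpsS : -(S x) ≤ max (-(S x)) 0 := le_max_left _ _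
    have hp1L : -(L1 x) ≤ max (-(L1 x)) 0 := le_max_left _ _
    have hpiI : -(I x) ≤ max (-(I x)) 0 := le_max_left _ _
    have hp2L : -(L2 x) ≤ max (-(L2 x)) 0 := le_max_left _ _
    have hprR : -(R x) ≤ max (-(R x)) 0 := le_max_left _ _
    have hgx := congrFun hgdef x
    have hDx := congrFun hDdef x
    have T1 : (if S x ≤ 0 then max (-(μ * N - β / N * I x * S x - μ * S x)) 0 else 0)
        ≤ K0 * g x := by
      split_ifs with h
      · refine max_le ?_ (mul_nonneg hK0 (hgnn x))
        have e : max (-(S x)) 0 = -(S x) := max_eq_left (by linarith)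
        rw [hgx, e]
        have m1 : 0 ≤ β / N * ((M + I x) * (-(S x))) :=
          mul_nonneg hb.le (mul_nonneg (by linarith) (by linarith))
        have m2 : 0 ≤ (K0 - β / N * M) * (-(S x)) :=
          mul_nonneg (by linarith) (by linarith)
        have m3 : μ * S x ≤ 0 := mul_nonpos_of_nonneg_of_nonpos hμ.le h
        linarith [mul_nonneg hK0 hp1, mul_nonneg hK0 hpi, mul_nonneg hK0 hp2,
          mul_nonneg hK0 hpr, mul_nonneg hμ.le hN.le]
      · exact mul_nonneg hK0 (hgnn x)
    have T2 : (if L1 x ≤ 0 then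
        max (-(β / N * I x * (S x + σ * L2 x + σR * R x) - (δ + τ1 + μ) * L1 x)) 0 else 0)
        ≤ K0 * g x := by
      split_ifs with h
      · refine max_le ?_ (mul_nonneg hK0 (hgnn x))
        rw [hgx]
        have hXup : S x + σ * L2 x + σR * R x ≤ M * (1 + σ + σR) := by
          linarith [mul_nonneg hσ.le (show 0 ≤ M - L2 x by linarith),
            mul_nonneg hσR.le (show 0 ≤ M - R x by linarith)]
        have hXlow : -(S x + σ * L2 x + σR * R x) ≤
            max (-(S x)) 0 + σ * max (-(L2 x)) 0 + σR * max (-(R x)) 0 := by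
          linarith [mul_nonneg hσ.le (show 0 ≤ max (-(L2 x)) 0 + L2 x by linarith),
            mul_nonneg hσR.le (show 0 ≤ max (-(R x)) 0 + R x by linarith)]
        have hkey : (-(I x)) * (S x + σ * L2 x + σR * R x) ≤
            M * (1 + σ + σR) * max (-(I x)) 0
            + M * (max (-(S x)) 0 + σ * max (-(L2 x)) 0 + σR * max (-(R x)) 0) := by
          rcases le_or_gt 0 (S x + σ * L2 x + σR * R x) with hX | hX
          · linarith [mul_le_mul_of_nonneg_right hpiI hX,
              mul_le_mul_of_nonneg_left hXup hpi,
              mul_nonneg hM0 (add_nonneg (add_nonneg hps (mul_nonneg hσ.le hp2))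
                (mul_nonneg hσR.le hpr))]
          · linarith [mul_le_mul_of_nonneg_right (show I x ≤ M by linarith)
                (show 0 ≤ -(S x + σ * L2 x + σR * R x) by linarith),
              mul_le_mul_of_nonneg_left hXlow hM0,
              mul_nonneg (mul_nonneg hM0 (show (0:ℝ) ≤ 1 + σ + σR by linarith)) hpi]
        have hmul := mul_le_mul_of_nonneg_left hkey hb.le
        have hl1 : (δ + τ1 + μ) * L1 x ≤ 0 :=
          mul_nonpos_of_nonneg_of_nonpos (by linarith) h
        linarith [hmul, mul_nonneg (sub_nonneg.2 hc1) hpi,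
          mul_nonneg (sub_nonneg.2 hc2) hps, mul_nonneg (sub_nonneg.2 hc3) hp2,
          mul_nonneg (sub_nonneg.2 hc4) hpr, mul_nonneg hK0 hp1]
      · exact mul_nonneg hK0 (hgnn x)
    have T3 : (if I x ≤ 0 then
        max (-(φ * δ * L1 x + ω * L2 x + ωR * R x - (τ0 + ε1 * u1 x + μ) * I x)) 0 else 0)
        ≤ K0 * g x := by
      split_ifs with h
      · refine max_le ?_ (mul_nonneg hK0 (hgnn x))
        rw [hgx]
        have a1 : φ * δ * (-(L1 x)) ≤ φ * δ * max (-(L1 x)) 0 :=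
          mul_le_mul_of_nonneg_left hp1L (mul_nonneg hφ0.le hδ.le)
        have a2 : ω * (-(L2 x)) ≤ ω * max (-(L2 x)) 0 :=
          mul_le_mul_of_nonneg_left hp2L hω.le
        have a3 : ωR * (-(R x)) ≤ ωR * max (-(R x)) 0 :=
          mul_le_mul_of_nonneg_left hprR hωR.le
        have a4 : (τ0 + ε1 * u1 x + μ) * I x ≤ 0 :=
          mul_nonpos_of_nonneg_of_nonpos (by linarith) h
        linarith [a1, a2, a3, a4, mul_nonneg (sub_nonneg.2 hcφδ) hp1,
          mul_nonneg (sub_nonneg.2 hcω) hp2, mul_nonneg (sub_nonneg.2 hcωR) hpr,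
          mul_nonneg hK0 hps, mul_nonneg hK0 hpi]
      · exact mul_nonneg hK0 (hgnn x)
    have T4 : (if L2 x ≤ 0 then
        max (-((1 - φ) * δ * L1 x - σ * (β / N) * I x * L2 x
          - (ω + ε2 * u2 x + τ2 + μ) * L2 x)) 0 else 0) ≤ K0 * g x := by
      split_ifs with h
      · refine max_le ?_ (mul_nonneg hK0 (hgnn x))
        have e : max (-(L2 x)) 0 = -(L2 x) := max_eq_left (by linarith)
        rw [hgx, e]
        have b1 : (1 - φ) * δ * (-(L1 x)) ≤ (1 - φ) * δ * max (-(L1 x)) 0 :=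
          mul_le_mul_of_nonneg_left hp1L (mul_nonneg (by linarith) hδ.le)
        have b2i : I x * L2 x ≤ M * (-(L2 x)) := by
          linarith [mul_nonneg (show 0 ≤ M + I x by linarith)
            (show 0 ≤ -(L2 x) by linarith)]
        have b2 := mul_le_mul_of_nonneg_left b2i (mul_nonneg hσ.le hb.le)
        have b3 : (ω + ε2 * u2 x + τ2 + μ) * L2 x ≤ 0 :=
          mul_nonpos_of_nonneg_of_nonpos (by linarith) h
        linarith [b1, b2, b3, mul_nonneg (sub_nonneg.2 hc1φδ) hp1,
          mul_nonneg (sub_nonneg.2 hc3) (show 0 ≤ -(L2 x) by linarith),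
          mul_nonneg hK0 hps, mul_nonneg hK0 hpi, mul_nonneg hK0 hpr]
      · exact mul_nonneg hK0 (hgnn x)
    have T5 : (if R x ≤ 0 then
        max (-((τ0 + ε1 * u1 x) * I x + τ1 * L1 x + (τ2 + ε2 * u2 x) * L2 x
          - σR * (β / N) * I x * R x - (ωR + μ) * R x)) 0 else 0) ≤ K0 * g x := by
      split_ifs with h
      · refine max_le ?_ (mul_nonneg hK0 (hgnn x))
        have e : max (-(R x)) 0 = -(R x) := max_eq_left (by linarith)
        rw [hgx, e]
        have q1 : (0:ℝ) ≤ τ0 + ε1 * u1 x := by linarith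
        have q2 : τ0 + ε1 * u1 x ≤ τ0 + ε1 := by
          linarith [mul_nonneg hε1.le (show 0 ≤ 1 - u1 x by linarith)]
        have c1a : (τ0 + ε1 * u1 x) * (-(I x)) ≤ (τ0 + ε1 * u1 x) * max (-(I x)) 0 :=
          mul_le_mul_of_nonneg_left hpiI q1
        have c1b : (τ0 + ε1 * u1 x) * max (-(I x)) 0 ≤ (τ0 + ε1) * max (-(I x)) 0 :=
          mul_le_mul_of_nonneg_right q2 hpi
        have c2 : τ1 * (-(L1 x)) ≤ τ1 * max (-(L1 x)) 0 :=
          mul_le_mul_of_nonneg_left hp1L hτ1.le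
        have q3 : (0:ℝ) ≤ τ2 + ε2 * u2 x := by linarith
        have q4 : τ2 + ε2 * u2 x ≤ τ2 + ε2 := by
          linarith [mul_nonneg hε2.le (show 0 ≤ 1 - u2 x by linarith)]
        have c3a : (τ2 + ε2 * u2 x) * (-(L2 x)) ≤ (τ2 + ε2 * u2 x) * max (-(L2 x)) 0 :=
          mul_le_mul_of_nonneg_left hp2L q3
        have c3b : (τ2 + ε2 * u2 x) * max (-(L2 x)) 0 ≤ (τ2 + ε2) * max (-(L2 x)) 0 :=
          mul_le_mul_of_nonneg_right q4 hp2
        have c4i : I x * R x ≤ M * (-(R x)) := by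
          linarith [mul_nonneg (show 0 ≤ M + I x by linarith)
            (show 0 ≤ -(R x) by linarith)]
        have c4 := mul_le_mul_of_nonneg_left c4i (mul_nonneg hσR.le hb.le)
        have c5 : (ωR + μ) * R x ≤ 0 :=
          mul_nonpos_of_nonneg_of_nonpos (by linarith) h
        linarith [c1a, c1b, c2, c3a, c3b, c4, c5,
          mul_nonneg (sub_nonneg.2 hcτ0) hpi, mul_nonneg (sub_nonneg.2 hcτ1) hp1,
          mul_nonneg (sub_nonneg.2 hcτ2) hp2,
          mul_nonneg (sub_nonneg.2 hc4) (show 0 ≤ -(R x) by linarith),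
          mul_nonneg hK0 hps]
      · exact mul_nonneg hK0 (hgnn x)
    rw [hDx]
    linarith [T1, T2, T3, T4, T5]
  have gron := le_gronwallBound_of_liminf_deriv_right_le (δ := 0) (K := 5 * K0) (ε := 0)
    hgc hf' hg0.le hbound
  have hnn : ∀ t ∈ Set.Icc (0:ℝ) T,
      0 ≤ S t ∧ 0 ≤ L1 t ∧ 0 ≤ I t ∧ 0 ≤ L2 t ∧ 0 ≤ R t := by
    intro t ht
    have hgt := gron t ht
    rw [gronwallBound_ε0_δ0] at hgt
    have hgx := congrFun hgdef t
    rw [hgx] at hgt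
    have m1 : (0:ℝ) ≤ max (-(S t)) 0 := le_max_right _ _
    have m2 : (0:ℝ) ≤ max (-(L1 t)) 0 := le_max_right _ _
    have m3 : (0:ℝ) ≤ max (-(I t)) 0 := le_max_right _ _
    have m4 : (0:ℝ) ≤ max (-(L2 t)) 0 := le_max_right _ _
    have m5 : (0:ℝ) ≤ max (-(R t)) 0 := le_max_right _ _
    have l1 : -(S t) ≤ max (-(S t)) 0 := le_max_left _ _
    have l2 : -(L1 t) ≤ max (-(L1 t)) 0 := le_max_left _ _
    have l3 : -(I t) ≤ max (-(I t)) 0 := le_max_left _ _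
    have l4 : -(L2 t) ≤ max (-(L2 t)) 0 := le_max_left _ _
    have l5 : -(R t) ≤ max (-(R t)) 0 := le_max_left _ _
    exact ⟨by linarith, by linarith, by linarith, by linarith, by linarith⟩
  -- the total population is constant
  have hWc : ContinuousOn (fun t => S t + L1 t + I t + L2 t + R t - N) (Set.Icc 0 T) :=
    ((((hSc.add hL1c).add hIc).add hL2c).add hRc).sub continuousOn_const
  have hW : ∀ x ∈ Set.Ico (0:ℝ) T,
      HasDerivWithinAt (fun t => S t + L1 t + I t + L2 t + R t - N)
        (-μ * (S x + L1 x + I x + L2 x + R x - N)) (Set.Ici x) x := by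
    intro x hx
    have hxI : x ∈ Set.Icc (0:ℝ) T := ⟨hx.1, hx.2.le⟩
    have h := (((((hS x hxI).add (hL1 x hxI)).add (hI x hxI)).add (hL2 x hxI)).add
      (hR x hxI)).sub_const N
    have h' : HasDerivWithinAt (fun t => S t + L1 t + I t + L2 t + R t - N)
        (-μ * (S x + L1 x + I x + L2 x + R x - N)) (Set.Icc (0:ℝ) T) x := by
      convert h using 1
      · rfl
      · rfl
      · rfl
      ring
    exact h'.mono_of_mem_nhdsWithin (Filter.mem_of_superset
      (Icc_mem_nhdsGE_of_mem ⟨le_rfl, hx.2⟩) (Set.Icc_subset_Icc hx.1 le_rfl))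
  have hWa : ‖S 0 + L1 0 + I 0 + L2 0 + R 0 - N‖ ≤ (0:ℝ) := by
    have : S 0 + L1 0 + I 0 + L2 0 + R 0 - N = 0 := by linarith
    simp [this]
  have hWbound : ∀ x ∈ Set.Ico (0:ℝ) T,
      ‖-μ * (S x + L1 x + I x + L2 x + R x - N)‖ ≤
        μ * ‖S x + L1 x + I x + L2 x + R x - N‖ + 0 := by
    intro x _
    rw [norm_mul, Real.norm_eq_abs (-μ), abs_neg, abs_of_pos hμ]
    simp
  have hWz := norm_le_gronwallBound_of_norm_deriv_right_le (δ := 0) (K := μ) (ε := 0)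
    hWc hW hWa hWbound
  -- conclusion
  intro t ht
  obtain ⟨hs, hl1, hi, hl2, hr⟩ := hnn t ht
  have hw := hWz t ht
  rw [gronwallBound_ε0_δ0] at hw
  have h0 : S t + L1 t + I t + L2 t + R t - N = 0 := by
    have := norm_nonneg (S t + L1 t + I t + L2 t + R t - N)
    have heq : ‖S t + L1 t + I t + L2 t + R t - N‖ = 0 := le_antisymm hw this
    exact norm_eq_zero.1 heq
  exact ⟨⟨hs, by linarith⟩, ⟨hl1, by linarith⟩, ⟨hi, by linarith⟩,
    ⟨hl2, by linarith⟩, ⟨hr, by linarith⟩⟩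
end

section
/- Let T > 0 and let u1, u2 : [0,T] → [0,1] be continuous controls. For every initial condition (S₀, L1₀, I₀, L2₀, R₀) ∈ ℝ⁵ with all entries nonnegative and S₀ + L1₀ + I₀ + L2₀ + R₀ = N, there exists a differentiable solution (S, L1, I, L2, R) : [0,T] → ℝ⁵ of the TB control system with controls u1, u2, defined on the whole interval [0,T], with (S(0), L1(0), I(0), L2(0), R(0)) = (S₀, L1₀, I₀, L2₀, R₀). -/
open Set

lemma tb_clamp_lip (N x y : ℝ) : |max 0 (min x N) - max 0 (min y N)| ≤ |x - y| := by
  refine (abs_max_sub_max_le_max 0 (min x N) 0 (min y N)).trans ?_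
  simp only [sub_self, abs_zero]
  refine max_le (by positivity) ?_
  refine (abs_min_sub_min_le_max x N y N).trans ?_
  simp [abs_nonneg]

lemma tb_clamp_nonneg (N x : ℝ) : 0 ≤ max 0 (min x N) := le_max_left _ _

lemma tb_clamp_le (N : ℝ) (hN : 0 ≤ N) (x : ℝ) : max 0 (min x N) ≤ N :=
  max_le hN (min_le_right _ _)

lemma tb_clamp_eq (N x : ℝ) (h0 : 0 ≤ x) (hN : x ≤ N) : max 0 (min x N) = x := by
  rw [min_eq_left hN, max_eq_right h0]

lemma tb_mul_sub (N a a' b b' : ℝ) (ha : 0 ≤ a) (haN : a ≤ N) (hb' : 0 ≤ b') (hbN' : b' ≤ N) :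
    |a * b - a' * b'| ≤ N * |a - a'| + N * |b - b'| := by
  have h : a * b - a' * b' = a * (b - b') + (a - a') * b' := by ring
  rw [h]
  refine (abs_add_le _ _).trans ?_
  rw [abs_mul, abs_mul]
  have h1 : |a| * |b - b'| ≤ N * |b - b'| :=
    mul_le_mul_of_nonneg_right (by rwa [abs_of_nonneg ha]) (abs_nonneg _)
  have h2 : |a - a'| * |b'| ≤ |a - a'| * N :=
    mul_le_mul_of_nonneg_left (by rwa [abs_of_nonneg hb']) (abs_nonneg _)
  linarith [h1, h2]

lemma tb_coef_bound (a A d D : ℝ) (ha0 : 0 ≤ a) (haA : a ≤ A) (hd : |d| ≤ D) : |a * d| ≤ A * D := by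
  rw [abs_mul, abs_of_nonneg ha0]
  exact mul_le_mul haA hd (abs_nonneg _) (ha0.trans haA)

lemma tb_nonneg_of_deriv (T : ℝ) (x g : ℝ → ℝ)
    (hx : ∀ t ∈ Icc (0:ℝ) T, HasDerivWithinAt x (g t) (Icc (0:ℝ) T) t)
    (h0 : 0 ≤ x 0) (hg : ∀ t ∈ Icc (0:ℝ) T, x t ≤ 0 → 0 ≤ g t) :
    ∀ t ∈ Icc (0:ℝ) T, 0 ≤ x t := by
  intro t1 ht1
  by_contra hneg
  push_neg at hneg
  have hT0 : (0:ℝ) ≤ T := ht1.1.trans ht1.2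
  have hcont : ContinuousOn x (Icc (0:ℝ) T) := fun t ht => (hx t ht).continuousWithinAt
  set A : Set ℝ := Icc 0 t1 ∩ x ⁻¹' Ici 0 with hA
  have hsub : Icc (0:ℝ) t1 ⊆ Icc (0:ℝ) T := Icc_subset_Icc le_rfl ht1.2
  have hAne : A.Nonempty := ⟨0, ⟨le_rfl, ht1.1⟩, h0⟩
  have hAclosed : IsClosed A :=
    (hcont.mono hsub).preimage_isClosed_of_isClosed isClosed_Icc isClosed_Ici
  have hAcomp : IsCompact A := (isCompact_Icc).of_isClosed_subset hAclosed inter_subset_left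
  set s := sSup A with hs
  have hsA : s ∈ A := hAcomp.sSup_mem hAne
  have hsIcc : s ∈ Icc (0:ℝ) t1 := hsA.1
  have hxs : 0 ≤ x s := hsA.2
  have hst1 : s < t1 := by
    rcases lt_or_eq_of_le hsIcc.2 with h | h
    · exact h
    · exfalso; rw [h] at hxs; linarith
  have hneg' : ∀ t ∈ Ioc s t1, x t < 0 := by
    intro t ht
    by_contra hc
    push_neg at hc
    have hmem : t ∈ A := ⟨⟨hsIcc.1.trans ht.1.le, ht.2⟩, hc⟩
    have := le_csSup hAcomp.bddAbove hmem
    exact absurd this (not_le.2 ht.1)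
  have hmono : MonotoneOn x (Icc s t1) := by
    apply monotoneOn_of_deriv_nonneg (convex_Icc s t1)
    · exact hcont.mono (Icc_subset_Icc hsIcc.1 ht1.2)
    · intro t ht
      rw [interior_Icc] at ht
      have htT : t ∈ Icc (0:ℝ) T := ⟨hsIcc.1.trans ht.1.le, ht.2.le.trans ht1.2⟩
      have hnh : Icc (0:ℝ) T ∈ nhds t :=
        Icc_mem_nhds (lt_of_le_of_lt hsIcc.1 ht.1) (lt_of_lt_of_le ht.2 ht1.2)
      exact ((hx t htT).hasDerivAt hnh).differentiableAt.differentiableWithinAt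
    · intro t ht
      rw [interior_Icc] at ht
      have htT : t ∈ Icc (0:ℝ) T := ⟨hsIcc.1.trans ht.1.le, ht.2.le.trans ht1.2⟩
      have hnh : Icc (0:ℝ) T ∈ nhds t :=
        Icc_mem_nhds (lt_of_le_of_lt hsIcc.1 ht.1) (lt_of_lt_of_le ht.2 ht1.2)
      rw [((hx t htT).hasDerivAt hnh).deriv]
      exact hg t htT (hneg' t ⟨ht.1, ht.2.le⟩).le
  have := hmono (left_mem_Icc.2 hst1.le) (right_mem_Icc.2 hst1.le) hst1.le
  linarith

lemma tb_dfst {F G : Type*} [NormedAddCommGroup F] [NormedSpace ℝ F] [NormedAddCommGroup G]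
    [NormedSpace ℝ G] {f : ℝ → F × G} {v : F × G} {s : Set ℝ} {t : ℝ}
    (h : HasDerivWithinAt f v s t) : HasDerivWithinAt (fun x => (f x).1) v.1 s t := by
  have := (ContinuousLinearMap.fst ℝ F G).hasFDerivAt.comp_hasDerivWithinAt t h
  simpa [Function.comp_def] using this

lemma tb_dsnd {F G : Type*} [NormedAddCommGroup F] [NormedSpace ℝ F] [NormedAddCommGroup G]
    [NormedSpace ℝ G] {f : ℝ → F × G} {v : F × G} {s : Set ℝ} {t : ℝ}
    (h : HasDerivWithinAt f v s t) : HasDerivWithinAt (fun x => (f x).2) v.2 s t := by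
  have := (ContinuousLinearMap.snd ℝ F G).hasFDerivAt.comp_hasDerivWithinAt t h
  simpa [Function.comp_def] using this

lemma tb_proj_bounds (p q : ℝ × ℝ × ℝ × ℝ × ℝ) :
    |p.1 - q.1| ≤ dist p q ∧ |p.2.1 - q.2.1| ≤ dist p q ∧ |p.2.2.1 - q.2.2.1| ≤ dist p q ∧
      |p.2.2.2.1 - q.2.2.2.1| ≤ dist p q ∧ |p.2.2.2.2 - q.2.2.2.2| ≤ dist p q := by
  simp only [Prod.dist_eq, Real.dist_eq]
  refine ⟨le_max_left _ _, ?_, ?_, ?_, ?_⟩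
  · exact le_trans (le_max_left _ _) (le_max_right _ _)
  · exact le_trans (le_trans (le_max_left _ _) (le_max_right _ _)) (le_max_right _ _)
  · exact le_trans (le_trans (le_trans (le_max_left _ _) (le_max_right _ _)) (le_max_right _ _))
      (le_max_right _ _)
  · exact le_trans (le_trans (le_trans (le_max_right _ _) (le_max_right _ _)) (le_max_right _ _))
      (le_max_right _ _)

/-- The truncated (clamped) TB vector field. -/
noncomputable def tbV (μ β δ ω ωR σ σR τ0 τ1 τ2 N ε1 ε2 φ : ℝ) (u1 u2 : ℝ → ℝ) (t : ℝ)
    (p : ℝ × ℝ × ℝ × ℝ × ℝ) : ℝ × ℝ × ℝ × ℝ × ℝ :=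
  (μ * N - β / N * max 0 (min p.2.2.1 N) * max 0 (min p.1 N) - μ * max 0 (min p.1 N),
   β / N * max 0 (min p.2.2.1 N) *
      (max 0 (min p.1 N) + σ * max 0 (min p.2.2.2.1 N) + σR * max 0 (min p.2.2.2.2 N))
     - (δ + τ1 + μ) * max 0 (min p.2.1 N),
   φ * δ * max 0 (min p.2.1 N) + ω * max 0 (min p.2.2.2.1 N) + ωR * max 0 (min p.2.2.2.2 N)
     - (τ0 + ε1 * u1 t + μ) * max 0 (min p.2.2.1 N),
   (1 - φ) * δ * max 0 (min p.2.1 N)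
     - σ * (β / N) * max 0 (min p.2.2.1 N) * max 0 (min p.2.2.2.1 N)
     - (ω + ε2 * u2 t + τ2 + μ) * max 0 (min p.2.2.2.1 N),
   (τ0 + ε1 * u1 t) * max 0 (min p.2.2.1 N) + τ1 * max 0 (min p.2.1 N)
     + (τ2 + ε2 * u2 t) * max 0 (min p.2.2.2.1 N)
     - σR * (β / N) * max 0 (min p.2.2.1 N) * max 0 (min p.2.2.2.2 N)
     - (ωR + μ) * max 0 (min p.2.2.2.2 N))




set_option maxHeartbeats 4000000 in
/-- For the TB control system with continuous controls taking
values in `[0,1]`, and any nonnegative initial condition summing to `N`,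
there exists a differentiable solution defined on the whole interval `[0,T]`
with the prescribed initial values. -/
theorem tb_solution_exists_globally
    (μ β δ ω ωR σ σR τ0 τ1 τ2 N ε1 ε2 φ : ℝ)
    (hμ : 0 < μ) (hβ : 0 < β) (hδ : 0 < δ) (hω : 0 < ω) (hωR : 0 < ωR)
    (hσ : 0 < σ) (hσR : 0 < σR) (hτ0 : 0 < τ0) (hτ1 : 0 < τ1) (hτ2 : 0 < τ2)
    (hN : 0 < N) (hε1 : 0 < ε1) (hε2 : 0 < ε2) (hφ : φ ∈ Set.Ioo (0 : ℝ) 1)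
    (T : ℝ) (hT : 0 < T)
    (u1 u2 : ℝ → ℝ)
    (hu1c : ContinuousOn u1 (Set.Icc (0 : ℝ) T))
    (hu2c : ContinuousOn u2 (Set.Icc (0 : ℝ) T))
    (hu1 : ∀ t ∈ Set.Icc (0 : ℝ) T, u1 t ∈ Set.Icc (0 : ℝ) 1)
    (hu2 : ∀ t ∈ Set.Icc (0 : ℝ) T, u2 t ∈ Set.Icc (0 : ℝ) 1)
    (S0 L10 I0 L20 R0 : ℝ)
    (hS0 : 0 ≤ S0) (hL10 : 0 ≤ L10) (hI0 : 0 ≤ I0) (hL20 : 0 ≤ L20)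
    (hR0 : 0 ≤ R0) (hsum0 : S0 + L10 + I0 + L20 + R0 = N) :
    ∃ S L1 I L2 R : ℝ → ℝ,
      (∀ t ∈ Set.Icc (0 : ℝ) T,
        HasDerivWithinAt S (μ * N - β / N * I t * S t - μ * S t)
          (Set.Icc (0 : ℝ) T) t) ∧
      (∀ t ∈ Set.Icc (0 : ℝ) T,
        HasDerivWithinAt L1
          (β / N * I t * (S t + σ * L2 t + σR * R t) - (δ + τ1 + μ) * L1 t)
          (Set.Icc (0 : ℝ) T) t) ∧
      (∀ t ∈ Set.Icc (0 : ℝ) T,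
        HasDerivWithinAt I
          (φ * δ * L1 t + ω * L2 t + ωR * R t - (τ0 + ε1 * u1 t + μ) * I t)
          (Set.Icc (0 : ℝ) T) t) ∧
      (∀ t ∈ Set.Icc (0 : ℝ) T,
        HasDerivWithinAt L2
          ((1 - φ) * δ * L1 t - σ * (β / N) * I t * L2 t
            - (ω + ε2 * u2 t + τ2 + μ) * L2 t)
          (Set.Icc (0 : ℝ) T) t) ∧
      (∀ t ∈ Set.Icc (0 : ℝ) T,
        HasDerivWithinAt R
          ((τ0 + ε1 * u1 t) * I t + τ1 * L1 t + (τ2 + ε2 * u2 t) * L2 t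
            - σR * (β / N) * I t * R t - (ωR + μ) * R t)
          (Set.Icc (0 : ℝ) T) t) ∧
      S 0 = S0 ∧ L1 0 = L10 ∧ I 0 = I0 ∧ L2 0 = L20 ∧ R 0 = R0 := by
  obtain ⟨hφ0, hφ1⟩ := hφ
  have hφ1' : (0:ℝ) ≤ 1 - φ := by linarith
  have hb : 0 < β / N := div_pos hβ hN
  have hN' : (0:ℝ) ≤ N := hN.le
  have hT' : (0:ℝ) ≤ T := hT.le
  set C : ℝ := (μ*N + β/N*(N*N) + μ*N)
    + (β/N*(N*N) + σ*(β/N)*(N*N) + σR*(β/N)*(N*N) + (δ+τ1+μ)*N)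
    + (φ*δ*N + ω*N + ωR*N + (τ0+ε1+μ)*N)
    + ((1-φ)*δ*N + σ*(β/N)*(N*N) + (ω+ε2+τ2+μ)*N)
    + ((τ0+ε1)*N + τ1*N + (τ2+ε2)*N + σR*(β/N)*(N*N) + (ωR+μ)*N) with hC
  have hNN : (0:ℝ) ≤ N*N := mul_nonneg hN' hN'
  have hbNN : (0:ℝ) ≤ β/N*(N*N) := mul_nonneg hb.le hNN
  have hsbNN : (0:ℝ) ≤ σ*(β/N)*(N*N) := mul_nonneg (mul_nonneg hσ.le hb.le) hNN
  have hsRbNN : (0:ℝ) ≤ σR*(β/N)*(N*N) := mul_nonneg (mul_nonneg hσR.le hb.le) hNN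
  have hC0 : 0 ≤ C := by
    rw [hC]
    linarith [mul_nonneg hμ.le hN', mul_nonneg (mul_nonneg hφ0.le hδ.le) hN',
      mul_nonneg hω.le hN', mul_nonneg hωR.le hN',
      mul_nonneg (by linarith : (0:ℝ) ≤ τ0+ε1+μ) hN',
      mul_nonneg (mul_nonneg hφ1' hδ.le) hN',
      mul_nonneg (by linarith : (0:ℝ) ≤ ω+ε2+τ2+μ) hN',
      mul_nonneg (by linarith : (0:ℝ) ≤ τ0+ε1) hN', mul_nonneg hτ1.le hN',
      mul_nonneg (by linarith : (0:ℝ) ≤ τ2+ε2) hN',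
      mul_nonneg (by linarith : (0:ℝ) ≤ ωR+μ) hN',
      mul_nonneg (by linarith : (0:ℝ) ≤ δ+τ1+μ) hN']
  set Kr : ℝ := (2*(β/N)*N + μ)
    + (2*(β/N)*N + 2*(σ*(β/N))*N + 2*(σR*(β/N))*N + (δ+τ1+μ))
    + (φ*δ + ω + ωR + (τ0+ε1+μ))
    + ((1-φ)*δ + 2*(σ*(β/N))*N + (ω+ε2+τ2+μ))
    + ((τ0+ε1) + τ1 + (τ2+ε2) + 2*(σR*(β/N))*N + (ωR+μ)) with hKr
  have hbN : (0:ℝ) ≤ β/N*N := mul_nonneg hb.le hN'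
  have hsbN : (0:ℝ) ≤ σ*(β/N)*N := mul_nonneg (mul_nonneg hσ.le hb.le) hN'
  have hsRbN : (0:ℝ) ≤ σR*(β/N)*N := mul_nonneg (mul_nonneg hσR.le hb.le) hN'
  have hKr0 : 0 ≤ Kr := by
    rw [hKr]
    linarith [mul_nonneg hφ0.le hδ.le, mul_nonneg hφ1' hδ.le, hbN, hsbN, hsRbN]
  set x₀ : ℝ × ℝ × ℝ × ℝ × ℝ := (S0, L10, I0, L20, R0) with hx₀
  have hpl : IsPicardLindelof (tbV μ β δ ω ωR σ σR τ0 τ1 τ2 N ε1 ε2 φ u1 u2)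
      (tmin := 0) (tmax := T) ⟨0, ⟨le_rfl, hT'⟩⟩ x₀
      (C*T).toNNReal 0 C.toNNReal Kr.toNNReal := by
    constructor
    · -- lipschitz
      intro t ht
      have hu1t := hu1 t ht
      have hu2t := hu2 t ht
      have he1 : ε1 * u1 t ≤ ε1 := by
        have := mul_le_mul_of_nonneg_left hu1t.2 hε1.le; simpa using this
      have he1' : 0 ≤ ε1 * u1 t := mul_nonneg hε1.le hu1t.1
      have he2 : ε2 * u2 t ≤ ε2 := by
        have := mul_le_mul_of_nonneg_left hu2t.2 hε2.le; simpa using this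
      have he2' : 0 ≤ ε2 * u2 t := mul_nonneg hε2.le hu2t.1
      apply LipschitzOnWith.of_dist_le_mul
      intro p hp q hq
      rw [Real.coe_toNNReal _ hKr0, hKr]
      obtain ⟨pd1, pd2, pd3, pd4, pd5⟩ := tb_proj_bounds p q
      have hD0 : 0 ≤ dist p q := dist_nonneg
      have cd1 : |max 0 (min p.1 N) - max 0 (min q.1 N)| ≤ dist p q :=
        (tb_clamp_lip N p.1 q.1).trans pd1
      have cd2 : |max 0 (min p.2.1 N) - max 0 (min q.2.1 N)| ≤ dist p q :=
        (tb_clamp_lip N p.2.1 q.2.1).trans pd2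
      have cd3 : |max 0 (min p.2.2.1 N) - max 0 (min q.2.2.1 N)| ≤ dist p q :=
        (tb_clamp_lip N p.2.2.1 q.2.2.1).trans pd3
      have cd4 : |max 0 (min p.2.2.2.1 N) - max 0 (min q.2.2.2.1 N)| ≤ dist p q :=
        (tb_clamp_lip N p.2.2.2.1 q.2.2.2.1).trans pd4
      have cd5 : |max 0 (min p.2.2.2.2 N) - max 0 (min q.2.2.2.2 N)| ≤ dist p q :=
        (tb_clamp_lip N p.2.2.2.2 q.2.2.2.2).trans pd5
      rw [Prod.dist_eq, Prod.dist_eq, Prod.dist_eq, Prod.dist_eq]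
      simp only [Real.dist_eq, tbV]
      set aS := max 0 (min p.1 N) with haS
      set aL1 := max 0 (min p.2.1 N) with haL1
      set aI := max 0 (min p.2.2.1 N) with haI
      set aL2 := max 0 (min p.2.2.2.1 N) with haL2
      set aR := max 0 (min p.2.2.2.2 N) with haR
      set bS := max 0 (min q.1 N) with hbS
      set bL1 := max 0 (min q.2.1 N) with hbL1
      set bI := max 0 (min q.2.2.1 N) with hbI
      set bL2 := max 0 (min q.2.2.2.1 N) with hbL2
      set bR := max 0 (min q.2.2.2.2 N) with hbR
      have n1 : 0 ≤ aS := tb_clamp_nonneg N p.1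
      have n3 : 0 ≤ aI := tb_clamp_nonneg N p.2.2.1
      have m1 : aS ≤ N := tb_clamp_le N hN' p.1
      have m3 : aI ≤ N := tb_clamp_le N hN' p.2.2.1
      have nb1 : 0 ≤ bS := tb_clamp_nonneg N q.1
      have nb4 : 0 ≤ bL2 := tb_clamp_nonneg N q.2.2.2.1
      have nb5 : 0 ≤ bR := tb_clamp_nonneg N q.2.2.2.2
      have mb1 : bS ≤ N := tb_clamp_le N hN' q.1
      have mb4 : bL2 ≤ N := tb_clamp_le N hN' q.2.2.2.1
      have mb5 : bR ≤ N := tb_clamp_le N hN' q.2.2.2.2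
      have hPIS : |aI * aS - bI * bS| ≤ N * dist p q + N * dist p q :=
        (tb_mul_sub N aI bI aS bS n3 m3 nb1 mb1).trans
          (add_le_add (mul_le_mul_of_nonneg_left cd3 hN') (mul_le_mul_of_nonneg_left cd1 hN'))
      have hPIL2 : |aI * aL2 - bI * bL2| ≤ N * dist p q + N * dist p q :=
        (tb_mul_sub N aI bI aL2 bL2 n3 m3 nb4 mb4).trans
          (add_le_add (mul_le_mul_of_nonneg_left cd3 hN') (mul_le_mul_of_nonneg_left cd4 hN'))
      have hPIR : |aI * aR - bI * bR| ≤ N * dist p q + N * dist p q :=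
        (tb_mul_sub N aI bI aR bR n3 m3 nb5 mb5).trans
          (add_le_add (mul_le_mul_of_nonneg_left cd3 hN') (mul_le_mul_of_nonneg_left cd5 hN'))
      have q1 := abs_le.1 (tb_coef_bound (β/N) (β/N) _ _ hb.le le_rfl hPIS)
      have q2 := abs_le.1 (tb_coef_bound (σ*(β/N)) (σ*(β/N)) _ _
        (mul_nonneg hσ.le hb.le) le_rfl hPIL2)
      have q3 := abs_le.1 (tb_coef_bound (σR*(β/N)) (σR*(β/N)) _ _
        (mul_nonneg hσR.le hb.le) le_rfl hPIR)
      have q4 := abs_le.1 (tb_coef_bound μ μ _ _ hμ.le le_rfl cd1)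
      have q5 := abs_le.1 (tb_coef_bound (δ+τ1+μ) (δ+τ1+μ) _ _ (by linarith) le_rfl cd2)
      have q6 := abs_le.1 (tb_coef_bound (φ*δ) (φ*δ) _ _ (mul_nonneg hφ0.le hδ.le) le_rfl cd2)
      have q7 := abs_le.1 (tb_coef_bound ω ω _ _ hω.le le_rfl cd4)
      have q8 := abs_le.1 (tb_coef_bound ωR ωR _ _ hωR.le le_rfl cd5)
      have q9 := abs_le.1 (tb_coef_bound (τ0+ε1*u1 t+μ) (τ0+ε1+μ) _ _
        (by linarith) (by linarith) cd3)
      have q10 := abs_le.1 (tb_coef_bound ((1-φ)*δ) ((1-φ)*δ) _ _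
        (mul_nonneg hφ1' hδ.le) le_rfl cd2)
      have q11 := abs_le.1 (tb_coef_bound (ω+ε2*u2 t+τ2+μ) (ω+ε2+τ2+μ) _ _
        (by linarith) (by linarith) cd4)
      have q12 := abs_le.1 (tb_coef_bound (τ0+ε1*u1 t) (τ0+ε1) _ _
        (by linarith) (by linarith) cd3)
      have q13 := abs_le.1 (tb_coef_bound τ1 τ1 _ _ hτ1.le le_rfl cd2)
      have q14 := abs_le.1 (tb_coef_bound (τ2+ε2*u2 t) (τ2+ε2) _ _
        (by linarith) (by linarith) cd4)
      have q15 := abs_le.1 (tb_coef_bound (ωR+μ) (ωR+μ) _ _ (by linarith) le_rfl cd5)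
      have s1 : 0 ≤ (2*(β/N)*N + μ) * dist p q := mul_nonneg (by linarith) hD0
      have s2 : 0 ≤ (2*(β/N)*N + 2*(σ*(β/N))*N + 2*(σR*(β/N))*N + (δ+τ1+μ)) * dist p q :=
        mul_nonneg (by linarith) hD0
      have s3 : 0 ≤ (φ*δ + ω + ωR + (τ0+ε1+μ)) * dist p q :=
        mul_nonneg (by linarith [mul_nonneg hφ0.le hδ.le]) hD0
      have s4 : 0 ≤ ((1-φ)*δ + 2*(σ*(β/N))*N + (ω+ε2+τ2+μ)) * dist p q :=
        mul_nonneg (by linarith [mul_nonneg hφ1' hδ.le]) hD0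
      have s5 : 0 ≤ ((τ0+ε1) + τ1 + (τ2+ε2) + 2*(σR*(β/N))*N + (ωR+μ)) * dist p q :=
        mul_nonneg (by linarith) hD0
      refine max_le ?_ (max_le ?_ (max_le ?_ (max_le ?_ ?_))) <;> rw [abs_le] <;>
        constructor <;> linarith
    · -- cont
      intro x hx
      simp only [tbV]
      refine ContinuousOn.prodMk continuousOn_const (ContinuousOn.prodMk continuousOn_const
        (ContinuousOn.prodMk ?_ (ContinuousOn.prodMk ?_ ?_)))
      · exact ((continuousOn_const.add continuousOn_const).add continuousOn_const).sub
          (((continuousOn_const.add (continuousOn_const.mul hu1c)).add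
            continuousOn_const).mul continuousOn_const)
      · exact (continuousOn_const.sub continuousOn_const).sub
          ((((continuousOn_const.add (continuousOn_const.mul hu2c)).add
            continuousOn_const).add continuousOn_const).mul continuousOn_const)
      · exact (((((continuousOn_const.add (continuousOn_const.mul hu1c)).mul
            continuousOn_const).add continuousOn_const).add
            ((continuousOn_const.add (continuousOn_const.mul hu2c)).mul
              continuousOn_const)).sub continuousOn_const).sub continuousOn_const
    · -- norm_le
      intro t ht x hx
      have hu1t := hu1 t ht
      have hu2t := hu2 t ht
      have he1 : ε1 * u1 t ≤ ε1 := by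
        have := mul_le_mul_of_nonneg_left hu1t.2 hε1.le; simpa using this
      have he1' : 0 ≤ ε1 * u1 t := mul_nonneg hε1.le hu1t.1
      have he2 : ε2 * u2 t ≤ ε2 := by
        have := mul_le_mul_of_nonneg_left hu2t.2 hε2.le; simpa using this
      have he2' : 0 ≤ ε2 * u2 t := mul_nonneg hε2.le hu2t.1
      simp only [tbV, Prod.norm_def, Real.norm_eq_abs]
      set aS := max 0 (min x.1 N) with haS
      set aL1 := max 0 (min x.2.1 N) with haL1
      set aI := max 0 (min x.2.2.1 N) with haI
      set aL2 := max 0 (min x.2.2.2.1 N) with haL2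
      set aR := max 0 (min x.2.2.2.2 N) with haR
      have n1 : 0 ≤ aS := tb_clamp_nonneg N x.1
      have n2 : 0 ≤ aL1 := tb_clamp_nonneg N x.2.1
      have n3 : 0 ≤ aI := tb_clamp_nonneg N x.2.2.1
      have n4 : 0 ≤ aL2 := tb_clamp_nonneg N x.2.2.2.1
      have n5 : 0 ≤ aR := tb_clamp_nonneg N x.2.2.2.2
      have m1 : aS ≤ N := tb_clamp_le N hN' x.1
      have m2 : aL1 ≤ N := tb_clamp_le N hN' x.2.1
      have m3 : aI ≤ N := tb_clamp_le N hN' x.2.2.1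
      have m4 : aL2 ≤ N := tb_clamp_le N hN' x.2.2.2.1
      have m5 : aR ≤ N := tb_clamp_le N hN' x.2.2.2.2
      have hIS : aI * aS ≤ N * N := mul_le_mul m3 m1 n1 hN'
      have hIS0 : 0 ≤ aI * aS := mul_nonneg n3 n1
      have hIL2 : aI * aL2 ≤ N * N := mul_le_mul m3 m4 n4 hN'
      have hIL20 : 0 ≤ aI * aL2 := mul_nonneg n3 n4
      have hIR : aI * aR ≤ N * N := mul_le_mul m3 m5 n5 hN'
      have hIR0 : 0 ≤ aI * aR := mul_nonneg n3 n5
      have w1 : β/N*(aI*aS) ≤ β/N*(N*N) := mul_le_mul_of_nonneg_left hIS hb.le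
      have w1' : 0 ≤ β/N*(aI*aS) := mul_nonneg hb.le hIS0
      have w2 : σ*(β/N)*(aI*aL2) ≤ σ*(β/N)*(N*N) :=
        mul_le_mul_of_nonneg_left hIL2 (mul_nonneg hσ.le hb.le)
      have w2' : 0 ≤ σ*(β/N)*(aI*aL2) := mul_nonneg (mul_nonneg hσ.le hb.le) hIL20
      have w3 : σR*(β/N)*(aI*aR) ≤ σR*(β/N)*(N*N) :=
        mul_le_mul_of_nonneg_left hIR (mul_nonneg hσR.le hb.le)
      have w3' : 0 ≤ σR*(β/N)*(aI*aR) := mul_nonneg (mul_nonneg hσR.le hb.le) hIR0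
      have w4 : μ*aS ≤ μ*N := mul_le_mul_of_nonneg_left m1 hμ.le
      have w4' : 0 ≤ μ*aS := mul_nonneg hμ.le n1
      have w5 : (δ+τ1+μ)*aL1 ≤ (δ+τ1+μ)*N := mul_le_mul_of_nonneg_left m2 (by linarith)
      have w5' : 0 ≤ (δ+τ1+μ)*aL1 := mul_nonneg (by linarith) n2
      have w6 : φ*δ*aL1 ≤ φ*δ*N := mul_le_mul_of_nonneg_left m2 (mul_nonneg hφ0.le hδ.le)
      have w6' : 0 ≤ φ*δ*aL1 := mul_nonneg (mul_nonneg hφ0.le hδ.le) n2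
      have w7 : ω*aL2 ≤ ω*N := mul_le_mul_of_nonneg_left m4 hω.le
      have w7' : 0 ≤ ω*aL2 := mul_nonneg hω.le n4
      have w8 : ωR*aR ≤ ωR*N := mul_le_mul_of_nonneg_left m5 hωR.le
      have w8' : 0 ≤ ωR*aR := mul_nonneg hωR.le n5
      have w9 : (τ0+ε1*u1 t+μ)*aI ≤ (τ0+ε1+μ)*N :=
        mul_le_mul (by linarith) m3 n3 (by linarith)
      have w9' : 0 ≤ (τ0+ε1*u1 t+μ)*aI := mul_nonneg (by linarith) n3
      have w10 : (1-φ)*δ*aL1 ≤ (1-φ)*δ*N := mul_le_mul_of_nonneg_left m2 (mul_nonneg hφ1' hδ.le)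
      have w10' : 0 ≤ (1-φ)*δ*aL1 := mul_nonneg (mul_nonneg hφ1' hδ.le) n2
      have w11 : (ω+ε2*u2 t+τ2+μ)*aL2 ≤ (ω+ε2+τ2+μ)*N :=
        mul_le_mul (by linarith) m4 n4 (by linarith)
      have w11' : 0 ≤ (ω+ε2*u2 t+τ2+μ)*aL2 := mul_nonneg (by linarith) n4
      have w12 : (τ0+ε1*u1 t)*aI ≤ (τ0+ε1)*N := mul_le_mul (by linarith) m3 n3 (by linarith)
      have w12' : 0 ≤ (τ0+ε1*u1 t)*aI := mul_nonneg (by linarith) n3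
      have w13 : τ1*aL1 ≤ τ1*N := mul_le_mul_of_nonneg_left m2 hτ1.le
      have w13' : 0 ≤ τ1*aL1 := mul_nonneg hτ1.le n2
      have w14 : (τ2+ε2*u2 t)*aL2 ≤ (τ2+ε2)*N := mul_le_mul (by linarith) m4 n4 (by linarith)
      have w14' : 0 ≤ (τ2+ε2*u2 t)*aL2 := mul_nonneg (by linarith) n4
      have w15 : (ωR+μ)*aR ≤ (ωR+μ)*N := mul_le_mul_of_nonneg_left m5 (by linarith)
      have w15' : 0 ≤ (ωR+μ)*aR := mul_nonneg (by linarith) n5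
      have hμN : 0 ≤ μ*N := mul_nonneg hμ.le hN'
      rw [Real.coe_toNNReal _ hC0]
      rw [hC]
      refine max_le ?_ (max_le ?_ (max_le ?_ (max_le ?_ ?_))) <;> rw [abs_le] <;>
        constructor <;> linarith [mul_nonneg hω.le hN', mul_nonneg hωR.le hN',
          mul_nonneg (mul_nonneg hφ0.le hδ.le) hN', mul_nonneg (mul_nonneg hφ1' hδ.le) hN',
          mul_nonneg hτ1.le hN', mul_nonneg (by linarith : (0:ℝ) ≤ δ+τ1+μ) hN',
          mul_nonneg (by linarith : (0:ℝ) ≤ τ0+ε1+μ) hN',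
          mul_nonneg (by linarith : (0:ℝ) ≤ ω+ε2+τ2+μ) hN',
          mul_nonneg (by linarith : (0:ℝ) ≤ τ0+ε1) hN',
          mul_nonneg (by linarith : (0:ℝ) ≤ τ2+ε2) hN',
          mul_nonneg (by linarith : (0:ℝ) ≤ ωR+μ) hN']
    · simp [max_eq_left hT', Real.toNNReal_mul hC0]
  obtain ⟨f, hf0 : f 0 = x₀, hf'⟩ := hpl.exists_eq_forall_mem_Icc_hasDerivWithinAt₀
  -- component derivatives
  have hS' : ∀ t ∈ Icc (0:ℝ) T, HasDerivWithinAt (fun s => (f s).1)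
      (μ*N - β/N * max 0 (min (f t).2.2.1 N) * max 0 (min (f t).1 N)
        - μ * max 0 (min (f t).1 N)) (Icc (0:ℝ) T) t := by
    intro t ht
    simpa [tbV] using tb_dfst (hf' t ht)
  have hL1' : ∀ t ∈ Icc (0:ℝ) T, HasDerivWithinAt (fun s => (f s).2.1)
      (β/N * max 0 (min (f t).2.2.1 N) * (max 0 (min (f t).1 N)
          + σ * max 0 (min (f t).2.2.2.1 N) + σR * max 0 (min (f t).2.2.2.2 N))
        - (δ+τ1+μ) * max 0 (min (f t).2.1 N)) (Icc (0:ℝ) T) t := by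
    intro t ht
    simpa [tbV] using tb_dfst (tb_dsnd (hf' t ht))
  have hI' : ∀ t ∈ Icc (0:ℝ) T, HasDerivWithinAt (fun s => (f s).2.2.1)
      (φ*δ * max 0 (min (f t).2.1 N) + ω * max 0 (min (f t).2.2.2.1 N)
        + ωR * max 0 (min (f t).2.2.2.2 N)
        - (τ0 + ε1 * u1 t + μ) * max 0 (min (f t).2.2.1 N)) (Icc (0:ℝ) T) t := by
    intro t ht
    simpa [tbV] using tb_dfst (tb_dsnd (tb_dsnd (hf' t ht)))
  have hL2' : ∀ t ∈ Icc (0:ℝ) T, HasDerivWithinAt (fun s => (f s).2.2.2.1)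
      ((1-φ)*δ * max 0 (min (f t).2.1 N)
        - σ*(β/N) * max 0 (min (f t).2.2.1 N) * max 0 (min (f t).2.2.2.1 N)
        - (ω + ε2 * u2 t + τ2 + μ) * max 0 (min (f t).2.2.2.1 N)) (Icc (0:ℝ) T) t := by
    intro t ht
    simpa [tbV] using tb_dfst (tb_dsnd (tb_dsnd (tb_dsnd (hf' t ht))))
  have hR' : ∀ t ∈ Icc (0:ℝ) T, HasDerivWithinAt (fun s => (f s).2.2.2.2)
      ((τ0 + ε1 * u1 t) * max 0 (min (f t).2.2.1 N) + τ1 * max 0 (min (f t).2.1 N)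
        + (τ2 + ε2 * u2 t) * max 0 (min (f t).2.2.2.1 N)
        - σR*(β/N) * max 0 (min (f t).2.2.1 N) * max 0 (min (f t).2.2.2.2 N)
        - (ωR + μ) * max 0 (min (f t).2.2.2.2 N)) (Icc (0:ℝ) T) t := by
    intro t ht
    simpa [tbV] using tb_dsnd (tb_dsnd (tb_dsnd (tb_dsnd (hf' t ht))))
  -- nonnegativity of all components
  have hSnn : ∀ t ∈ Icc (0:ℝ) T, 0 ≤ (f t).1 := by
    refine tb_nonneg_of_deriv T _ _ hS' (by rw [hf0, hx₀]; exact hS0) ?_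
    intro t ht hle
    rw [min_eq_left (hle.trans hN'), max_eq_left hle]
    have := mul_pos hμ hN
    have h0 : 0 ≤ β/N * max 0 (min (f t).2.2.1 N) :=
      mul_nonneg hb.le (tb_clamp_nonneg _ _)
    nlinarith
  have hL1nn : ∀ t ∈ Icc (0:ℝ) T, 0 ≤ (f t).2.1 := by
    refine tb_nonneg_of_deriv T _ _ hL1' (by rw [hf0, hx₀]; exact hL10) ?_
    intro t ht hle
    rw [min_eq_left (hle.trans hN'), max_eq_left hle]
    have h0 : 0 ≤ β/N * max 0 (min (f t).2.2.1 N) * (max 0 (min (f t).1 N)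
        + σ * max 0 (min (f t).2.2.2.1 N) + σR * max 0 (min (f t).2.2.2.2 N)) :=
      mul_nonneg (mul_nonneg hb.le (tb_clamp_nonneg _ _))
        (add_nonneg (add_nonneg (tb_clamp_nonneg _ _)
          (mul_nonneg hσ.le (tb_clamp_nonneg _ _)))
          (mul_nonneg hσR.le (tb_clamp_nonneg _ _)))
    linarith
  have hInn : ∀ t ∈ Icc (0:ℝ) T, 0 ≤ (f t).2.2.1 := by
    refine tb_nonneg_of_deriv T _ _ hI' (by rw [hf0, hx₀]; exact hI0) ?_
    intro t ht hle
    rw [min_eq_left (hle.trans hN'), max_eq_left hle]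
    have h1 : 0 ≤ φ*δ * max 0 (min (f t).2.1 N) :=
      mul_nonneg (mul_nonneg hφ0.le hδ.le) (tb_clamp_nonneg _ _)
    have h2 : 0 ≤ ω * max 0 (min (f t).2.2.2.1 N) := mul_nonneg hω.le (tb_clamp_nonneg _ _)
    have h3 : 0 ≤ ωR * max 0 (min (f t).2.2.2.2 N) := mul_nonneg hωR.le (tb_clamp_nonneg _ _)
    linarith
  have hL2nn : ∀ t ∈ Icc (0:ℝ) T, 0 ≤ (f t).2.2.2.1 := by
    refine tb_nonneg_of_deriv T _ _ hL2' (by rw [hf0, hx₀]; exact hL20) ?_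
    intro t ht hle
    rw [min_eq_left (hle.trans hN'), max_eq_left hle]
    have h1 : 0 ≤ (1-φ)*δ * max 0 (min (f t).2.1 N) :=
      mul_nonneg (mul_nonneg hφ1' hδ.le) (tb_clamp_nonneg _ _)
    linarith
  have hRnn : ∀ t ∈ Icc (0:ℝ) T, 0 ≤ (f t).2.2.2.2 := by
    refine tb_nonneg_of_deriv T _ _ hR' (by rw [hf0, hx₀]; exact hR0) ?_
    intro t ht hle
    rw [min_eq_left (hle.trans hN'), max_eq_left hle]
    have hu1t := hu1 t ht
    have hu2t := hu2 t ht
    have h1 : 0 ≤ (τ0 + ε1 * u1 t) * max 0 (min (f t).2.2.1 N) :=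
      mul_nonneg (by have := mul_nonneg hε1.le hu1t.1; linarith) (tb_clamp_nonneg _ _)
    have h2 : 0 ≤ τ1 * max 0 (min (f t).2.1 N) := mul_nonneg hτ1.le (tb_clamp_nonneg _ _)
    have h3 : 0 ≤ (τ2 + ε2 * u2 t) * max 0 (min (f t).2.2.2.1 N) :=
      mul_nonneg (by have := mul_nonneg hε2.le hu2t.1; linarith) (tb_clamp_nonneg _ _)
    linarith
  -- the total population is constant equal to N (Gronwall)
  have key : ∀ t ∈ Icc (0:ℝ) T,
      ‖(f t).1 + (f t).2.1 + (f t).2.2.1 + (f t).2.2.2.1 + (f t).2.2.2.2 - N‖ ≤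
        gronwallBound 0 (5*μ) 0 (t - 0) := by
    have hgd : ∀ t ∈ Icc (0:ℝ) T, HasDerivWithinAt
        (fun s => (f s).1 + (f s).2.1 + (f s).2.2.1 + (f s).2.2.2.1 + (f s).2.2.2.2 - N)
        ((μ*N - β/N * max 0 (min (f t).2.2.1 N) * max 0 (min (f t).1 N)
            - μ * max 0 (min (f t).1 N))
          + (β/N * max 0 (min (f t).2.2.1 N) * (max 0 (min (f t).1 N)
              + σ * max 0 (min (f t).2.2.2.1 N) + σR * max 0 (min (f t).2.2.2.2 N))
            - (δ+τ1+μ) * max 0 (min (f t).2.1 N))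
          + (φ*δ * max 0 (min (f t).2.1 N) + ω * max 0 (min (f t).2.2.2.1 N)
            + ωR * max 0 (min (f t).2.2.2.2 N)
            - (τ0 + ε1 * u1 t + μ) * max 0 (min (f t).2.2.1 N))
          + ((1-φ)*δ * max 0 (min (f t).2.1 N)
            - σ*(β/N) * max 0 (min (f t).2.2.1 N) * max 0 (min (f t).2.2.2.1 N)
            - (ω + ε2 * u2 t + τ2 + μ) * max 0 (min (f t).2.2.2.1 N))
          + ((τ0 + ε1 * u1 t) * max 0 (min (f t).2.2.1 N) + τ1 * max 0 (min (f t).2.1 N)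
            + (τ2 + ε2 * u2 t) * max 0 (min (f t).2.2.2.1 N)
            - σR*(β/N) * max 0 (min (f t).2.2.1 N) * max 0 (min (f t).2.2.2.2 N)
            - (ωR + μ) * max 0 (min (f t).2.2.2.2 N)))
        (Icc (0:ℝ) T) t := by
      intro t ht
      exact (((((hS' t ht).add (hL1' t ht)).add (hI' t ht)).add
        (hL2' t ht)).add (hR' t ht)).sub_const N
    apply norm_le_gronwallBound_of_norm_deriv_right_le
      (f' := fun t =>
        (μ*N - β/N * max 0 (min (f t).2.2.1 N) * max 0 (min (f t).1 N)
            - μ * max 0 (min (f t).1 N))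
          + (β/N * max 0 (min (f t).2.2.1 N) * (max 0 (min (f t).1 N)
              + σ * max 0 (min (f t).2.2.2.1 N) + σR * max 0 (min (f t).2.2.2.2 N))
            - (δ+τ1+μ) * max 0 (min (f t).2.1 N))
          + (φ*δ * max 0 (min (f t).2.1 N) + ω * max 0 (min (f t).2.2.2.1 N)
            + ωR * max 0 (min (f t).2.2.2.2 N)
            - (τ0 + ε1 * u1 t + μ) * max 0 (min (f t).2.2.1 N))
          + ((1-φ)*δ * max 0 (min (f t).2.1 N)
            - σ*(β/N) * max 0 (min (f t).2.2.1 N) * max 0 (min (f t).2.2.2.1 N)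
            - (ω + ε2 * u2 t + τ2 + μ) * max 0 (min (f t).2.2.2.1 N))
          + ((τ0 + ε1 * u1 t) * max 0 (min (f t).2.2.1 N) + τ1 * max 0 (min (f t).2.1 N)
            + (τ2 + ε2 * u2 t) * max 0 (min (f t).2.2.2.1 N)
            - σR*(β/N) * max 0 (min (f t).2.2.1 N) * max 0 (min (f t).2.2.2.2 N)
            - (ωR + μ) * max 0 (min (f t).2.2.2.2 N)))
    · exact fun t ht => (hgd t ht).continuousWithinAt
    · intro t ht
      have hmem : Icc (0:ℝ) T ∈ nhdsWithin t (Ici t) := by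
        refine mem_nhdsWithin.2 ⟨Iio T, isOpen_Iio, ht.2, ?_⟩
        rintro y ⟨hy1, hy2⟩
        exact ⟨le_trans ht.1 hy2, le_of_lt hy1⟩
      exact (hgd t ⟨ht.1, ht.2.le⟩).mono_of_mem_nhdsWithin hmem
    · have : (f 0).1 + (f 0).2.1 + (f 0).2.2.1 + (f 0).2.2.2.1 + (f 0).2.2.2.2 - N = 0 := by
        rw [hf0, hx₀]
        show S0 + L10 + I0 + L20 + R0 - N = 0
        linarith
      rw [this]
      simp
    · intro t ht
      have htIcc : t ∈ Icc (0:ℝ) T := ⟨ht.1, ht.2.le⟩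
      have nS := hSnn t htIcc
      have nL1 := hL1nn t htIcc
      have nI := hInn t htIcc
      have nL2 := hL2nn t htIcc
      have nR := hRnn t htIcc
      have Q := (f t).1 + (f t).2.1 + (f t).2.2.1 + (f t).2.2.2.1 + (f t).2.2.2.2
      simp only [Real.norm_eq_abs]
      -- clamp facts
      have mle1 : max 0 (min (f t).1 N) ≤ (f t).1 := max_le nS (min_le_left _ _)
      have mle2 : max 0 (min (f t).2.1 N) ≤ (f t).2.1 := max_le nL1 (min_le_left _ _)
      have mle3 : max 0 (min (f t).2.2.1 N) ≤ (f t).2.2.1 := max_le nI (min_le_left _ _)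
      have mle4 : max 0 (min (f t).2.2.2.1 N) ≤ (f t).2.2.2.1 := max_le nL2 (min_le_left _ _)
      have mle5 : max 0 (min (f t).2.2.2.2 N) ≤ (f t).2.2.2.2 := max_le nR (min_le_left _ _)
      have hQs : ∀ X : ℝ, 0 ≤ X →
          X ≤ (f t).1 + (f t).2.1 + (f t).2.2.1 + (f t).2.2.2.1 + (f t).2.2.2.2 →
          (X - max ((f t).1 + (f t).2.1 + (f t).2.2.1 + (f t).2.2.2.1 + (f t).2.2.2.2 - N) 0
            ≤ max 0 (min X N)) := by
        intro X hX0 hXQ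
        rcases le_total X N with h | h
        · rw [tb_clamp_eq N X hX0 h]
          linarith [le_max_right
            ((f t).1 + (f t).2.1 + (f t).2.2.1 + (f t).2.2.2.1 + (f t).2.2.2.2 - N) (0:ℝ)]
        · rw [min_eq_right h, max_eq_right hN']
          linarith [le_max_left
            ((f t).1 + (f t).2.1 + (f t).2.2.1 + (f t).2.2.2.1 + (f t).2.2.2.2 - N) (0:ℝ)]
      have mge1 := hQs (f t).1 nS (by linarith)
      have mge2 := hQs (f t).2.1 nL1 (by linarith)
      have mge3 := hQs (f t).2.2.1 nI (by linarith)
      have mge4 := hQs (f t).2.2.2.1 nL2 (by linarith)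
      have mge5 := hQs (f t).2.2.2.2 nR (by linarith)
      have pml1 : μ * max 0 (min (f t).1 N) ≤ μ * (f t).1 :=
        mul_le_mul_of_nonneg_left mle1 hμ.le
      have pml2 : μ * max 0 (min (f t).2.1 N) ≤ μ * (f t).2.1 :=
        mul_le_mul_of_nonneg_left mle2 hμ.le
      have pml3 : μ * max 0 (min (f t).2.2.1 N) ≤ μ * (f t).2.2.1 :=
        mul_le_mul_of_nonneg_left mle3 hμ.le
      have pml4 : μ * max 0 (min (f t).2.2.2.1 N) ≤ μ * (f t).2.2.2.1 :=
        mul_le_mul_of_nonneg_left mle4 hμ.le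
      have pml5 : μ * max 0 (min (f t).2.2.2.2 N) ≤ μ * (f t).2.2.2.2 :=
        mul_le_mul_of_nonneg_left mle5 hμ.le
      have pmg1 := mul_le_mul_of_nonneg_left mge1 hμ.le
      have pmg2 := mul_le_mul_of_nonneg_left mge2 hμ.le
      have pmg3 := mul_le_mul_of_nonneg_left mge3 hμ.le
      have pmg4 := mul_le_mul_of_nonneg_left mge4 hμ.le
      have pmg5 := mul_le_mul_of_nonneg_left mge5 hμ.le
      rcases le_total 0 ((f t).1 + (f t).2.1 + (f t).2.2.1 + (f t).2.2.2.1 + (f t).2.2.2.2 - N)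
        with hQ | hQ
      · have hM : max ((f t).1 + (f t).2.1 + (f t).2.2.1 + (f t).2.2.2.1 + (f t).2.2.2.2 - N)
            (0:ℝ) = (f t).1 + (f t).2.1 + (f t).2.2.1 + (f t).2.2.2.1 + (f t).2.2.2.2 - N :=
          max_eq_left hQ
        have hM2 : μ * (max ((f t).1 + (f t).2.1 + (f t).2.2.1 + (f t).2.2.2.1
            + (f t).2.2.2.2 - N) (0:ℝ)) = μ * ((f t).1 + (f t).2.1 + (f t).2.2.1
            + (f t).2.2.2.1 + (f t).2.2.2.2 - N) := by rw [hM]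
        rw [abs_of_nonneg hQ]
        have h5 : 0 ≤ μ * ((f t).1 + (f t).2.1 + (f t).2.2.1 + (f t).2.2.2.1
            + (f t).2.2.2.2 - N) := mul_nonneg hμ.le hQ
        rw [abs_le]
        constructor <;>
          linarith only [pml1, pml2, pml3, pml4, pml5, pmg1, pmg2, pmg3, pmg4, pmg5, hM2, h5]
      · have hM : max ((f t).1 + (f t).2.1 + (f t).2.2.1 + (f t).2.2.2.1 + (f t).2.2.2.2 - N)
            (0:ℝ) = 0 := max_eq_right hQ
        have hM2 : μ * (max ((f t).1 + (f t).2.1 + (f t).2.2.1 + (f t).2.2.2.1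
            + (f t).2.2.2.2 - N) (0:ℝ)) = 0 := by rw [hM, mul_zero]
        rw [abs_of_nonpos hQ]
        have h5 : μ * ((f t).1 + (f t).2.1 + (f t).2.2.1 + (f t).2.2.2.1
            + (f t).2.2.2.2 - N) ≤ 0 := by
          have := mul_le_mul_of_nonneg_left hQ hμ.le
          simpa using this
        rw [abs_le]
        constructor <;>
          linarith only [pml1, pml2, pml3, pml4, pml5, pmg1, pmg2, pmg3, pmg4, pmg5, hM2, h5]
  have hQN : ∀ t ∈ Icc (0:ℝ) T,
      (f t).1 + (f t).2.1 + (f t).2.2.1 + (f t).2.2.2.1 + (f t).2.2.2.2 = N := by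
    intro t ht
    have h := key t ht
    rw [gronwallBound_ε0_δ0] at h
    have h2 := norm_le_zero_iff.1 h
    linarith [sub_eq_zero.1 h2]
  -- conclusion
  refine ⟨fun s => (f s).1, fun s => (f s).2.1, fun s => (f s).2.2.1,
    fun s => (f s).2.2.2.1, fun s => (f s).2.2.2.2, ?_, ?_, ?_, ?_, ?_, ?_, ?_, ?_, ?_, ?_⟩
  · intro t ht
    have nS := hSnn t ht; have nL1 := hL1nn t ht; have nI := hInn t ht
    have nL2 := hL2nn t ht; have nR := hRnn t ht
    have hsum := hQN t ht
    have eS : max 0 (min (f t).1 N) = (f t).1 := tb_clamp_eq _ _ nS (by linarith)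
    have eI : max 0 (min (f t).2.2.1 N) = (f t).2.2.1 := tb_clamp_eq _ _ nI (by linarith)
    have h := hS' t ht
    rw [eS, eI] at h
    exact h
  · intro t ht
    have nS := hSnn t ht; have nL1 := hL1nn t ht; have nI := hInn t ht
    have nL2 := hL2nn t ht; have nR := hRnn t ht
    have hsum := hQN t ht
    have eS : max 0 (min (f t).1 N) = (f t).1 := tb_clamp_eq _ _ nS (by linarith)
    have eL1 : max 0 (min (f t).2.1 N) = (f t).2.1 := tb_clamp_eq _ _ nL1 (by linarith)
    have eI : max 0 (min (f t).2.2.1 N) = (f t).2.2.1 := tb_clamp_eq _ _ nI (by linarith)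
    have eL2 : max 0 (min (f t).2.2.2.1 N) = (f t).2.2.2.1 := tb_clamp_eq _ _ nL2 (by linarith)
    have eR : max 0 (min (f t).2.2.2.2 N) = (f t).2.2.2.2 := tb_clamp_eq _ _ nR (by linarith)
    have h := hL1' t ht
    rw [eS, eL1, eI, eL2, eR] at h
    exact h
  · intro t ht
    have nS := hSnn t ht; have nL1 := hL1nn t ht; have nI := hInn t ht
    have nL2 := hL2nn t ht; have nR := hRnn t ht
    have hsum := hQN t ht
    have eL1 : max 0 (min (f t).2.1 N) = (f t).2.1 := tb_clamp_eq _ _ nL1 (by linarith)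
    have eI : max 0 (min (f t).2.2.1 N) = (f t).2.2.1 := tb_clamp_eq _ _ nI (by linarith)
    have eL2 : max 0 (min (f t).2.2.2.1 N) = (f t).2.2.2.1 := tb_clamp_eq _ _ nL2 (by linarith)
    have eR : max 0 (min (f t).2.2.2.2 N) = (f t).2.2.2.2 := tb_clamp_eq _ _ nR (by linarith)
    have h := hI' t ht
    rw [eL1, eI, eL2, eR] at h
    exact h
  · intro t ht
    have nS := hSnn t ht; have nL1 := hL1nn t ht; have nI := hInn t ht
    have nL2 := hL2nn t ht; have nR := hRnn t ht
    have hsum := hQN t ht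
    have eL1 : max 0 (min (f t).2.1 N) = (f t).2.1 := tb_clamp_eq _ _ nL1 (by linarith)
    have eI : max 0 (min (f t).2.2.1 N) = (f t).2.2.1 := tb_clamp_eq _ _ nI (by linarith)
    have eL2 : max 0 (min (f t).2.2.2.1 N) = (f t).2.2.2.1 := tb_clamp_eq _ _ nL2 (by linarith)
    have h := hL2' t ht
    rw [eL1, eI, eL2] at h
    exact h
  · intro t ht
    have nS := hSnn t ht; have nL1 := hL1nn t ht; have nI := hInn t ht
    have nL2 := hL2nn t ht; have nR := hRnn t ht
    have hsum := hQN t ht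
    have eL1 : max 0 (min (f t).2.1 N) = (f t).2.1 := tb_clamp_eq _ _ nL1 (by linarith)
    have eI : max 0 (min (f t).2.2.1 N) = (f t).2.2.1 := tb_clamp_eq _ _ nI (by linarith)
    have eL2 : max 0 (min (f t).2.2.2.1 N) = (f t).2.2.2.1 := tb_clamp_eq _ _ nL2 (by linarith)
    have eR : max 0 (min (f t).2.2.2.2 N) = (f t).2.2.2.2 := tb_clamp_eq _ _ nR (by linarith)
    have h := hR' t ht
    rw [eL1, eI, eL2, eR] at h
    exact h
  · show (f 0).1 = S0
    rw [hf0, hx₀]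
  · show (f 0).2.1 = L10
    rw [hf0, hx₀]
  · show (f 0).2.2.1 = I0
    rw [hf0, hx₀]
  · show (f 0).2.2.2.1 = L20
    rw [hf0, hx₀]
  · show (f 0).2.2.2.2 = R0
    rw [hf0, hx₀]
end

section
/- Fix W1 > 0 and W2 > 0, a state value (S, L1, I, L2, R) ∈ ℝ⁵ and an adjoint value λ = (λ1, λ2, λ3, λ4, λ5) ∈ ℝ⁵. The function (u1, u2) ↦ H(S, L1, I, L2, R, λ, u1, u2) attains its minimum over the square [0,1]² at the point (û1, û2) with û1 = min{ max{0, ε1·I·(λ3 − λ5) / W1}, 1} and û2 = min{ max{0, ε2·L2·(λ4 − λ5) / W2}, 1}, and this minimizer is unique: every (u1, u2) ∈ [0,1]² with H(S, L1, I, L2, R, λ, u1, u2) = H(S, L1, I, L2, R, λ, û1, û2) satisfies (u1, u2) = (û1, û2). -/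
/-- The Hamiltonian of the TB optimal control problem. -/
noncomputable def tbHam (μ β δ ω ωR σ σR τ0 τ1 τ2 N ε1 ε2 φ W1 W2 : ℝ)
    (S L1 I L2 R : ℝ) (l : Fin 5 → ℝ) (u1 u2 : ℝ) : ℝ :=
  I + L2 + W1 / 2 * u1 ^ 2 + W2 / 2 * u2 ^ 2
    + l 0 * (μ * N - β / N * I * S - μ * S)
    + l 1 * (β / N * I * (S + σ * L2 + σR * R) - (δ + τ1 + μ) * L1)
    + l 2 * (φ * δ * L1 + ω * L2 + ωR * R - (τ0 + ε1 * u1 + μ) * I)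
    + l 3 * ((1 - φ) * δ * L1 - σ * (β / N) * I * L2 - (ω + ε2 * u2 + τ2 + μ) * L2)
    + l 4 * ((τ0 + ε1 * u1) * I + τ1 * L1 + (τ2 + ε2 * u2) * L2
        - σR * (β / N) * I * R - (ωR + μ) * R)

lemma quad_clamp_min (W a u : ℝ) (hW : 0 < W) (hu0 : 0 ≤ u) (hu1 : u ≤ 1) :
    W / 2 * (min (max 0 (a / W)) 1) ^ 2 - a * (min (max 0 (a / W)) 1)
      + W / 2 * (u - min (max 0 (a / W)) 1) ^ 2
      ≤ W / 2 * u ^ 2 - a * u := by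
  set c := min (max 0 (a / W)) 1 with hc
  have key : 0 ≤ (W * c - a) * (u - c) := by
    rcases le_or_gt (a / W) 0 with h | h
    · have hc0 : c = 0 := by
        rw [hc, max_eq_left h, min_eq_left zero_le_one]
      have ha : a ≤ 0 := by
        have := mul_nonpos_of_nonpos_of_nonneg h hW.le
        rwa [div_mul_cancel₀ a hW.ne'] at this
      rw [hc0]; nlinarith
    · rcases le_or_gt (a / W) 1 with h2 | h2
      · have hc0 : c = a / W := by
          rw [hc, max_eq_right h.le, min_eq_left h2]
        have : W * c - a = 0 := by rw [hc0]; field_simp; ring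
        rw [this, zero_mul]
      · have hc0 : c = 1 := by
          rw [hc, min_eq_right]
          exact le_max_of_le_right h2.le
        have ha : W ≤ a := by
          have := (one_lt_div hW).mp h2
          linarith
        rw [hc0]; nlinarith
  nlinarith

lemma tbHam_diff (μ β δ ω ωR σ σR τ0 τ1 τ2 N ε1 ε2 φ W1 W2 : ℝ)
    (S L1 I L2 R : ℝ) (l : Fin 5 → ℝ) (u1 u2 v1 v2 : ℝ) :
    tbHam μ β δ ω ωR σ σR τ0 τ1 τ2 N ε1 ε2 φ W1 W2 S L1 I L2 R l u1 u2
      - tbHam μ β δ ω ωR σ σR τ0 τ1 τ2 N ε1 ε2 φ W1 W2 S L1 I L2 R l v1 v2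
    = (W1 / 2 * u1 ^ 2 - (ε1 * I * (l 2 - l 4)) * u1)
      - (W1 / 2 * v1 ^ 2 - (ε1 * I * (l 2 - l 4)) * v1)
      + (W2 / 2 * u2 ^ 2 - (ε2 * L2 * (l 3 - l 4)) * u2)
      - (W2 / 2 * v2 ^ 2 - (ε2 * L2 * (l 3 - l 4)) * v2) := by
  unfold tbHam; ring

/-- For fixed state and adjoint values, the Hamiltonian,
as a function of the controls, attains its minimum over `[0,1]²` at the point
`(û₁, û₂)` given by the projection formulas, and this minimizer is unique. -/
theorem tb_hamiltonian_min
    (μ β δ ω ωR σ σR τ0 τ1 τ2 N ε1 ε2 φ W1 W2 : ℝ)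
    (hμ : 0 < μ) (hβ : 0 < β) (hδ : 0 < δ) (hω : 0 < ω) (hωR : 0 < ωR)
    (hσ : 0 < σ) (hσR : 0 < σR) (hτ0 : 0 < τ0) (hτ1 : 0 < τ1) (hτ2 : 0 < τ2)
    (hN : 0 < N) (hε1 : 0 < ε1) (hε2 : 0 < ε2) (hφ : φ ∈ Set.Ioo (0 : ℝ) 1)
    (hW1 : 0 < W1) (hW2 : 0 < W2)
    (S L1 I L2 R : ℝ) (l : Fin 5 → ℝ) :
    (∀ u1 ∈ Set.Icc (0 : ℝ) 1, ∀ u2 ∈ Set.Icc (0 : ℝ) 1,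
      tbHam μ β δ ω ωR σ σR τ0 τ1 τ2 N ε1 ε2 φ W1 W2 S L1 I L2 R l
        (min (max 0 (ε1 * I * (l 2 - l 4) / W1)) 1)
        (min (max 0 (ε2 * L2 * (l 3 - l 4) / W2)) 1)
      ≤ tbHam μ β δ ω ωR σ σR τ0 τ1 τ2 N ε1 ε2 φ W1 W2 S L1 I L2 R l u1 u2) ∧
    (∀ u1 ∈ Set.Icc (0 : ℝ) 1, ∀ u2 ∈ Set.Icc (0 : ℝ) 1,
      tbHam μ β δ ω ωR σ σR τ0 τ1 τ2 N ε1 ε2 φ W1 W2 S L1 I L2 R l u1 u2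
        = tbHam μ β δ ω ωR σ σR τ0 τ1 τ2 N ε1 ε2 φ W1 W2 S L1 I L2 R l
            (min (max 0 (ε1 * I * (l 2 - l 4) / W1)) 1)
            (min (max 0 (ε2 * L2 * (l 3 - l 4) / W2)) 1) →
      u1 = min (max 0 (ε1 * I * (l 2 - l 4) / W1)) 1 ∧
      u2 = min (max 0 (ε2 * L2 * (l 3 - l 4) / W2)) 1) := by
  
  have key : ∀ u1 ∈ Set.Icc (0 : ℝ) 1, ∀ u2 ∈ Set.Icc (0 : ℝ) 1,
      tbHam μ β δ ω ωR σ σR τ0 τ1 τ2 N ε1 ε2 φ W1 W2 S L1 I L2 R l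
        (min (max 0 (ε1 * I * (l 2 - l 4) / W1)) 1)
        (min (max 0 (ε2 * L2 * (l 3 - l 4) / W2)) 1)
      + W1 / 2 * (u1 - min (max 0 (ε1 * I * (l 2 - l 4) / W1)) 1) ^ 2
      + W2 / 2 * (u2 - min (max 0 (ε2 * L2 * (l 3 - l 4) / W2)) 1) ^ 2
      ≤ tbHam μ β δ ω ωR σ σR τ0 τ1 τ2 N ε1 ε2 φ W1 W2 S L1 I L2 R l u1 u2 := by
    intro u1 hu1 u2 hu2
    have h1 := quad_clamp_min W1 (ε1 * I * (l 2 - l 4)) u1 hW1 hu1.1 hu1.2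
    have h2 := quad_clamp_min W2 (ε2 * L2 * (l 3 - l 4)) u2 hW2 hu2.1 hu2.2
    have hd := tbHam_diff μ β δ ω ωR σ σR τ0 τ1 τ2 N ε1 ε2 φ W1 W2 S L1 I L2 R l
      u1 u2 (min (max 0 (ε1 * I * (l 2 - l 4) / W1)) 1)
      (min (max 0 (ε2 * L2 * (l 3 - l 4) / W2)) 1)
    linarith
  constructor
  · intro u1 hu1 u2 hu2
    have hk := key u1 hu1 u2 hu2
    nlinarith [sq_nonneg (u1 - min (max 0 (ε1 * I * (l 2 - l 4) / W1)) 1),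
      sq_nonneg (u2 - min (max 0 (ε2 * L2 * (l 3 - l 4) / W2)) 1)]
  · intro u1 hu1 u2 hu2 heq
    have hk := key u1 hu1 u2 hu2
    have hz1 : (u1 - min (max 0 (ε1 * I * (l 2 - l 4) / W1)) 1) ^ 2 = 0 := by
      nlinarith [sq_nonneg (u1 - min (max 0 (ε1 * I * (l 2 - l 4) / W1)) 1),
        sq_nonneg (u2 - min (max 0 (ε2 * L2 * (l 3 - l 4) / W2)) 1)]
    have hz2 : (u2 - min (max 0 (ε2 * L2 * (l 3 - l 4) / W2)) 1) ^ 2 = 0 := by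
      nlinarith [sq_nonneg (u1 - min (max 0 (ε1 * I * (l 2 - l 4) / W1)) 1),
        sq_nonneg (u2 - min (max 0 (ε2 * L2 * (l 3 - l 4) / W2)) 1)]
    constructor
    · have := pow_eq_zero_iff (n := 2) (by norm_num) |>.mp hz1
      linarith [sub_eq_zero.mp this]
    · have := pow_eq_zero_iff (n := 2) (by norm_num) |>.mp hz2
      linarith [sub_eq_zero.mp this]
end
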